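/- Let P° be the set of almost periodic functions ℝ → ℝ with positive infimum, ordered pointwise, and let Φ : P° → P° satisfy: (I) there exist constants u_0 < v_0 in P° (positive constants) with u_0 ≤ Φ(u_0, v_0) and Φ(v_0, u_0) ≤ v_0; (II) Φ is mixed monotone on [u_0, v_0]×[u_0,v_0] (nondecreasing in the first argument, nonincreasing in the second); (III) there is φ : [inf u_0 / sup v_0, 1) → (0,∞) with φ(γ) > γ and Φ(γx, γ⁻¹y) ≥ φ(γ)Φ(x,y) for all x, y ∈ [u_0, v_0] and γ in that interval. Then Φ has exactly one fixed point x̃ (i.e., Φ(x̃, x̃) = x̃) in the order interval [u_0, v_0]. -/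
import Mathlib


/-- Bohr almost periodicity of a real function. -/
def AlmostPeriodic (f : ℝ → ℝ) : Prop :=
  ∀ ε > 0, ∃ l > 0, ∀ a : ℝ, ∃ ξ ∈ Set.Icc a (a + l), ∀ t : ℝ, |f (t + ξ) - f t| < ε

/-- Membership in the interior of the nonnegative cone of `AP(ℝ)`:
almost periodic and bounded below by a positive constant. -/
def InPcirc (f : ℝ → ℝ) : Prop :=
  AlmostPeriodic f ∧ ∃ ε > 0, ∀ t : ℝ, ε ≤ f t

/-- Membership in the order interval `[u₀, v₀]` of constant functions `A ≤ B`. -/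
def InInterval (A B : ℝ) (f : ℝ → ℝ) : Prop :=
  AlmostPeriodic f ∧ ∀ t : ℝ, A ≤ f t ∧ f t ≤ B

lemma ap_const (c : ℝ) : AlmostPeriodic (fun _ => c) := by
  intro ε hε
  exact ⟨1, one_pos, fun a => ⟨a, ⟨le_refl a, by linarith⟩, fun t => by simpa using hε⟩⟩

lemma ap_lip (K : ℝ) (hK : 0 < K) (g f : ℝ → ℝ)
    (hg : ∀ a b : ℝ, |g a - g b| ≤ K * |a - b|) (hf : AlmostPeriodic f) :
    AlmostPeriodic (fun x => g (f x)) := by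
  intro ε hε
  obtain ⟨l, hl, h⟩ := hf (ε / K) (by positivity)
  refine ⟨l, hl, fun a => ?_⟩
  obtain ⟨ξ, hξ, hd⟩ := h a
  refine ⟨ξ, hξ, fun t => ?_⟩
  have h1 := hg (f (t + ξ)) (f t)
  have h2 := hd t
  have h3 : K * |f (t + ξ) - f t| < K * (ε / K) := mul_lt_mul_of_pos_left h2 hK
  have hKε : K * (ε / K) = ε := by field_simp
  linarith

lemma ap_mul (c : ℝ) (hc : 0 < c) (f : ℝ → ℝ) (hf : AlmostPeriodic f) :
    AlmostPeriodic (fun x => c * f x) :=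
  ap_lip c hc (fun a => c * a) f
    (fun a b => by rw [← mul_sub, abs_mul, abs_of_pos hc]) hf

lemma abs_max_sub_max' (a x y : ℝ) : |max a x - max a y| ≤ |x - y| := by
  have h1 : x - y ≤ |x - y| := le_abs_self _
  have h2 : y - x ≤ |x - y| := by rw [abs_sub_comm]; exact le_abs_self _
  have h0 : (0:ℝ) ≤ |x - y| := abs_nonneg _
  rcases le_total a x with hx | hx <;> rcases le_total a y with hy | hy
  · rw [max_eq_right hx, max_eq_right hy]
  · rw [max_eq_right hx, max_eq_left hy, abs_le]; constructor <;> linarith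
  · rw [max_eq_left hx, max_eq_right hy, abs_le]; constructor <;> linarith
  · rw [max_eq_left hx, max_eq_left hy, sub_self, abs_zero]; exact h0

lemma abs_min_sub_min' (a x y : ℝ) : |min a x - min a y| ≤ |x - y| := by
  have h1 : x - y ≤ |x - y| := le_abs_self _
  have h2 : y - x ≤ |x - y| := by rw [abs_sub_comm]; exact le_abs_self _
  have h0 : (0:ℝ) ≤ |x - y| := abs_nonneg _
  rcases le_total a x with hx | hx <;> rcases le_total a y with hy | hy
  · rw [min_eq_left hx, min_eq_left hy, sub_self, abs_zero]; exact h0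
  · rw [min_eq_left hx, min_eq_right hy, abs_le]; constructor <;> linarith
  · rw [min_eq_right hx, min_eq_left hy, abs_le]; constructor <;> linarith
  · rw [min_eq_right hx, min_eq_right hy]

lemma ap_max (a : ℝ) (f : ℝ → ℝ) (hf : AlmostPeriodic f) :
    AlmostPeriodic (fun x => max a (f x)) :=
  ap_lip 1 one_pos (fun x => max a x) f
    (fun x y => by rw [one_mul]; exact abs_max_sub_max' a x y) hf

lemma ap_min (a : ℝ) (f : ℝ → ℝ) (hf : AlmostPeriodic f) :
    AlmostPeriodic (fun x => min a (f x)) :=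
  ap_lip 1 one_pos (fun x => min a x) f
    (fun x y => by rw [one_mul]; exact abs_min_sub_min' a x y) hf

lemma ap_unif (f : ℝ → ℝ)
    (h : ∀ ε > (0:ℝ), ∃ g : ℝ → ℝ, AlmostPeriodic g ∧ ∀ x, |f x - g x| < ε) :
    AlmostPeriodic f := by
  intro ε hε
  obtain ⟨g, hg, hfg⟩ := h (ε / 3) (by linarith)
  obtain ⟨l, hl, H⟩ := hg (ε / 3) (by linarith)
  refine ⟨l, hl, fun a => ?_⟩
  obtain ⟨ξ, hξ, hd⟩ := H a
  refine ⟨ξ, hξ, fun t => ?_⟩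
  have h1 := hfg (t + ξ)
  have h2 := hfg t
  have h3 := hd t
  have e : f (t + ξ) - f t =
      (f (t + ξ) - g (t + ξ)) + ((g (t + ξ) - g t) + (g t - f t)) := by ring
  calc |f (t + ξ) - f t| ≤ |f (t + ξ) - g (t + ξ)| + |(g (t + ξ) - g t) + (g t - f t)| := by
        rw [e]; exact abs_add_le _ _
    _ ≤ |f (t + ξ) - g (t + ξ)| + (|g (t + ξ) - g t| + |g t - f t|) := by
        have := abs_add_le (g (t + ξ) - g t) (g t - f t); linarith
    _ < ε := by
        have h2' : |g t - f t| < ε / 3 := by rw [abs_sub_comm]; exact h2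
        linarith

lemma mul_max' (c x y : ℝ) (hc : 0 ≤ c) : c * max x y = max (c * x) (c * y) := by
  rcases le_total x y with h | h
  · rw [max_eq_right h, max_eq_right (mul_le_mul_of_nonneg_left h hc)]
  · rw [max_eq_left h, max_eq_left (mul_le_mul_of_nonneg_left h hc)]

lemma mul_min' (c x y : ℝ) (hc : 0 ≤ c) : c * min x y = min (c * x) (c * y) := by
  rcases le_total x y with h | h
  · rw [min_eq_left h, min_eq_left (mul_le_mul_of_nonneg_left h hc)]
  · rw [min_eq_right h, min_eq_right (mul_le_mul_of_nonneg_left h hc)]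

/-- The iteration sequence `(uₙ, vₙ)`. -/
noncomputable def seqUV (Φ : (ℝ → ℝ) → (ℝ → ℝ) → (ℝ → ℝ)) (A B : ℝ) :
    ℕ → ((ℝ → ℝ) × (ℝ → ℝ))
  | 0 => (fun _ => A, fun _ => B)
  | n + 1 => (Φ (seqUV Φ A B n).1 (seqUV Φ A B n).2,
              Φ (seqUV Φ A B n).2 (seqUV Φ A B n).1)

set_option maxHeartbeats 2000000 in
/-- Mixed monotone fixed point theorem on `AP(ℝ)` (Lemma on Φ with
`u₀ = A`, `v₀ = B` positive constants). -/
theorem stmt_8 (Φ : (ℝ → ℝ) → (ℝ → ℝ) → (ℝ → ℝ)) (A B : ℝ)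
    (hA : 0 < A) (hAB : A < B)
    (hmap : ∀ x y : ℝ → ℝ, InPcirc x → InPcirc y → InPcirc (Φ x y))
    -- (I): u₀ ≤ Φ(u₀, v₀) and Φ(v₀, u₀) ≤ v₀
    (hI₁ : ∀ t : ℝ, A ≤ Φ (fun _ => A) (fun _ => B) t)
    (hI₂ : ∀ t : ℝ, Φ (fun _ => B) (fun _ => A) t ≤ B)
    -- (II): Φ is mixed monotone on [u₀,v₀] × [u₀,v₀]
    (hII : ∀ x x' y y' : ℝ → ℝ, InInterval A B x → InInterval A B x' →
      InInterval A B y → InInterval A B y' →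
      (∀ t, x t ≤ x' t) → (∀ t, y' t ≤ y t) → ∀ t, Φ x y t ≤ Φ x' y' t)
    -- (III): the comparison function φ on [A/B, 1)
    (φ : ℝ → ℝ)
    (hφpos : ∀ γ : ℝ, A / B ≤ γ → γ < 1 → 0 < φ γ)
    (hφ : ∀ γ : ℝ, A / B ≤ γ → γ < 1 → φ γ > γ)
    (hIII : ∀ γ : ℝ, A / B ≤ γ → γ < 1 →
      ∀ x y : ℝ → ℝ, InInterval A B x → InInterval A B y →
        ∀ t, Φ (fun s => γ * x s) (fun s => γ⁻¹ * y s) t ≥ φ γ * Φ x y t) :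
    ∃! x : ℝ → ℝ, InInterval A B x ∧ Φ x x = x := by
  have hB : 0 < B := hA.trans hAB
  have hABr : 0 < A / B := div_pos hA hB
  have hABr1 : A / B < 1 := (div_lt_one hB).mpr hAB
  set u : ℕ → ℝ → ℝ := fun n => (seqUV Φ A B n).1 with hu_def
  set v : ℕ → ℝ → ℝ := fun n => (seqUV Φ A B n).2 with hv_def
  have hu0 : u 0 = fun _ => A := rfl
  have hv0 : v 0 = fun _ => B := rfl
  have husucc : ∀ n, u (n + 1) = Φ (u n) (v n) := fun n => rfl
  have hvsucc : ∀ n, v (n + 1) = Φ (v n) (u n) := fun n => rfl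
  have cAI : InInterval A B (fun _ => A) := ⟨ap_const A, fun _ => ⟨le_refl A, hAB.le⟩⟩
  have cBI : InInterval A B (fun _ => B) := ⟨ap_const B, fun _ => ⟨hAB.le, le_refl B⟩⟩
  -- basic properties of the sequences
  have good : ∀ n, InInterval A B (u n) ∧ InInterval A B (v n) ∧ ∀ x, u n x ≤ v n x := by
    intro n
    induction n with
    | zero => exact ⟨cAI, cBI, fun _ => hAB.le⟩
    | succ n ih =>
      obtain ⟨hu, hv, huv⟩ := ih
      have hup : InPcirc (u n) := ⟨hu.1, A, hA, fun t => (hu.2 t).1⟩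
      have hvp : InPcirc (v n) := ⟨hv.1, A, hA, fun t => (hv.2 t).1⟩
      have hAPu : AlmostPeriodic (u (n + 1)) := by
        rw [husucc]; exact (hmap _ _ hup hvp).1
      have hAPv : AlmostPeriodic (v (n + 1)) := by
        rw [hvsucc]; exact (hmap _ _ hvp hup).1
      have hlow : ∀ x, A ≤ u (n + 1) x := by
        intro x
        have h := hII (fun _ => A) (u n) (fun _ => B) (v n) cAI hu cBI hv
          (fun t => (hu.2 t).1) (fun t => (hv.2 t).2) x
        rw [husucc]; exact le_trans (hI₁ x) h
      have hhigh : ∀ x, v (n + 1) x ≤ B := by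
        intro x
        have h := hII (v n) (fun _ => B) (u n) (fun _ => A) hv cBI hu cAI
          (fun t => (hv.2 t).2) (fun t => (hu.2 t).1) x
        rw [hvsucc]; exact le_trans h (hI₂ x)
      have huv' : ∀ x, u (n + 1) x ≤ v (n + 1) x := by
        intro x
        rw [husucc, hvsucc]
        exact hII (u n) (v n) (v n) (u n) hu hv hv hu huv huv x
      exact ⟨⟨hAPu, fun x => ⟨hlow x, le_trans (huv' x) (hhigh x)⟩⟩,
             ⟨hAPv, fun x => ⟨le_trans (hlow x) (huv' x), hhigh x⟩⟩, huv'⟩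
  -- monotonicity
  have mono : ∀ n, (∀ x, u n x ≤ u (n + 1) x) ∧ (∀ x, v (n + 1) x ≤ v n x) := by
    intro n
    induction n with
    | zero =>
      constructor
      · intro x; exact ((good 1).1.2 x).1
      · intro x; exact ((good 1).2.1.2 x).2
    | succ n ih =>
      constructor
      · intro x
        rw [husucc, husucc]
        exact hII (u n) (u (n + 1)) (v n) (v (n + 1)) (good n).1 (good (n + 1)).1
          (good n).2.1 (good (n + 1)).2.1 ih.1 ih.2 x
      · intro x
        rw [hvsucc, hvsucc]
        exact hII (v (n + 1)) (v n) (u (n + 1)) (u n) (good (n + 1)).2.1 (good n).2.1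
          (good (n + 1)).1 (good n).1 ih.2 ih.1 x
  have umono : ∀ m n, m ≤ n → ∀ x, u m x ≤ u n x := by
    intro m n h
    induction n, h using Nat.le_induction with
    | base => exact fun x => le_refl _
    | succ k hk ih => exact fun x => le_trans (ih x) ((mono k).1 x)
  have vanti : ∀ m n, m ≤ n → ∀ x, v n x ≤ v m x := by
    intro m n h
    induction n, h using Nat.le_induction with
    | base => exact fun x => le_refl _
    | succ k hk ih => exact fun x => le_trans ((mono k).2 x) (ih x)
  have ulev : ∀ m n x, u m x ≤ v n x := by
    intro m n x
    rcases le_total m n with h | h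
    · exact le_trans (umono m n h x) ((good n).2.2 x)
    · exact le_trans ((good m).2.2 x) (vanti n m h x)
  have hvpos : ∀ n x, 0 < v n x := fun n x => lt_of_lt_of_le hA ((good n).2.1.2 x).1
  -- the ratio infimum τ
  set τ : ℕ → ℝ := fun n => sInf (Set.range fun x => u n x / v n x) with hτ_def
  have hratlb : ∀ n x, A / B ≤ u n x / v n x := fun n x =>
    div_le_div₀ (le_trans hA.le ((good n).1.2 x).1) ((good n).1.2 x).1 (hvpos n x)
      ((good n).2.1.2 x).2
  have hbdd : ∀ n, BddBelow (Set.range fun x => u n x / v n x) := fun n =>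
    ⟨A / B, by rintro y ⟨x, rfl⟩; exact hratlb n x⟩
  have hne : ∀ n, (Set.range fun x => u n x / v n x).Nonempty := fun n =>
    ⟨u n 0 / v n 0, 0, rfl⟩
  have hτlb : ∀ n, A / B ≤ τ n := fun n =>
    le_csInf (hne n) (by rintro y ⟨x, rfl⟩; exact hratlb n x)
  have hτub : ∀ n, τ n ≤ 1 := fun n =>
    le_trans (csInf_le (hbdd n) ⟨0, rfl⟩) ((div_le_one (hvpos n 0)).mpr ((good n).2.2 0))
  have hτv : ∀ n x, τ n * v n x ≤ u n x := by
    intro n x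
    have h := csInf_le (hbdd n) (Set.mem_range_self x)
    exact (le_div_iff₀ (hvpos n x)).mp h
  have hτge : ∀ n K, (∀ x, K * v n x ≤ u n x) → K ≤ τ n := by
    intro n K h
    exact le_csInf (hne n) (by rintro y ⟨x, rfl⟩; exact (le_div_iff₀ (hvpos n x)).mpr (h x))
  -- Core inequality
  have core : ∀ c : ℝ, A / B ≤ c → c < 1 → ∀ u' v' : ℝ → ℝ,
      InInterval A B u' → InInterval A B v' →
      ∀ x, φ c * Φ v' u' x ≤
        Φ (fun s => max A (c * v' s)) (fun s => min B (c⁻¹ * u' s)) x := by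
    intro c hc1 hc2 u' v' hu' hv' x
    have hc0 : 0 < c := lt_of_lt_of_le hABr hc1
    have hAcB' : A ≤ c * B := by
      have := (div_le_iff₀ hB).mp hc1; linarith
    have hAc : A ≤ A / c := by
      rw [le_div_iff₀ hc0]; nlinarith
    have hAcB : A / c ≤ B := by
      rw [div_le_iff₀ hc0]; nlinarith
    have hcB : c * B ≤ B := by nlinarith
    have hXI : InInterval A B (fun s => max (A / c) (v' s)) :=
      ⟨ap_max _ _ hv'.1, fun s =>
        ⟨le_trans hAc (le_max_left _ _), max_le hAcB ((hv'.2 s).2)⟩⟩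
    have hYI : InInterval A B (fun s => min (c * B) (u' s)) :=
      ⟨ap_min _ _ hu'.1, fun s =>
        ⟨le_min hAcB' ((hu'.2 s).1), le_trans (min_le_left _ _) hcB⟩⟩
    have h3 := hIII c hc1 hc2 _ _ hXI hYI x
    have h4 : Φ v' u' x ≤ Φ (fun s => max (A / c) (v' s)) (fun s => min (c * B) (u' s)) x :=
      hII v' _ u' _ hv' hXI hu' hYI (fun s => le_max_right _ _) (fun s => min_le_right _ _) x
    have heq1 : (fun s => c * max (A / c) (v' s)) = (fun s => max A (c * v' s)) := by
      funext s
      rw [mul_max' c _ _ hc0.le, mul_div_cancel₀ A hc0.ne']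
    have heq2 : (fun s => c⁻¹ * min (c * B) (u' s)) = (fun s => min B (c⁻¹ * u' s)) := by
      funext s
      rw [mul_min' c⁻¹ _ _ (inv_nonneg.mpr hc0.le), inv_mul_cancel_left₀ hc0.ne']
    calc φ c * Φ v' u' x
        ≤ φ c * Φ (fun s => max (A / c) (v' s)) (fun s => min (c * B) (u' s)) x :=
          mul_le_mul_of_nonneg_left h4 (hφpos c hc1 hc2).le
      _ ≤ Φ (fun s => c * max (A / c) (v' s)) (fun s => c⁻¹ * min (c * B) (u' s)) x := h3
      _ = _ := by rw [heq1, heq2]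
  -- one-step improvement
  have step1 : ∀ n, ∀ c : ℝ, A / B ≤ c → c < 1 → (∀ x, c * v n x ≤ u n x) →
      ∀ x, φ c * v (n + 1) x ≤ u (n + 1) x := by
    intro n c hc1 hc2 hcv x
    have hc0 : 0 < c := lt_of_lt_of_le hABr hc1
    obtain ⟨hu, hv, huv⟩ := good n
    have h1c : 1 ≤ c⁻¹ := by rw [← inv_one]; exact inv_anti₀ hc0 hc2.le
    have hmaxI : InInterval A B (fun s => max A (c * v n s)) :=
      ⟨ap_max A _ (ap_mul c hc0 _ hv.1), fun s =>
        ⟨le_max_left _ _, max_le hAB.le (le_trans (hcv s) (hu.2 s).2)⟩⟩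
    have hminI : InInterval A B (fun s => min B (c⁻¹ * u n s)) :=
      ⟨ap_min B _ (ap_mul c⁻¹ (inv_pos.mpr hc0) _ hu.1), fun s =>
        ⟨le_min hAB.le (le_trans (hu.2 s).1
          (le_mul_of_one_le_left (le_trans hA.le (hu.2 s).1) h1c)),
         min_le_left _ _⟩⟩
    have h5 : Φ (fun s => max A (c * v n s)) (fun s => min B (c⁻¹ * u n s)) x ≤
        Φ (u n) (v n) x := by
      refine hII _ (u n) _ (v n) hmaxI hu hminI hv
        (fun s => max_le (hu.2 s).1 (hcv s)) (fun s => le_min (hv.2 s).2 ?_) x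
      calc v n s = c⁻¹ * (c * v n s) := by field_simp
        _ ≤ c⁻¹ * u n s := mul_le_mul_of_nonneg_left (hcv s) (inv_nonneg.mpr hc0.le)
    rw [husucc, hvsucc]
    exact le_trans (core c hc1 hc2 (u n) (v n) hu hv x) h5
  -- two-step improvement
  have step2 : ∀ n, ∀ s t' : ℝ, A / B ≤ s → s < 1 → A / B ≤ t' → t' < 1 →
      (∀ x, s * t' * v n x ≤ u n x) →
      ∀ x, φ s * (φ t' * v (n + 1) x) ≤ u (n + 1) x := by
    intro n s t' hs1 hs2 ht1 ht2 hst x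
    have hs0 : 0 < s := lt_of_lt_of_le hABr hs1
    have ht0 : 0 < t' := lt_of_lt_of_le hABr ht1
    have hst0 : 0 < s * t' := mul_pos hs0 ht0
    have hst1 : s * t' < 1 := by nlinarith
    obtain ⟨hu, hv, huv⟩ := good n
    have h1st : 1 ≤ (s * t')⁻¹ := by
      rw [← inv_one]; exact inv_anti₀ hst0 hst1.le
    have h1t : 1 ≤ t'⁻¹ := by rw [← inv_one]; exact inv_anti₀ ht0 ht2.le
    have hAsB : A ≤ s * B := by
      have := (div_le_iff₀ hB).mp hs1; linarith
    have hAs : A ≤ A / s := by rw [le_div_iff₀ hs0]; nlinarith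
    have hAsB2 : A / s ≤ B := by rw [div_le_iff₀ hs0]; nlinarith
    have hsB : s * B ≤ B := by nlinarith
    -- interval memberships
    have hM1 : InInterval A B (fun z => max A (s * t' * v n z)) :=
      ⟨ap_max A _ (ap_mul (s * t') hst0 _ hv.1), fun z =>
        ⟨le_max_left _ _, max_le hAB.le (le_trans (hst z) (hu.2 z).2)⟩⟩
    have hM2 : InInterval A B (fun z => min B ((s * t')⁻¹ * u n z)) :=
      ⟨ap_min B _ (ap_mul _ (inv_pos.mpr hst0) _ hu.1), fun z =>
        ⟨le_min hAB.le (le_trans (hu.2 z).1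
          (le_mul_of_one_le_left (le_trans hA.le (hu.2 z).1) h1st)), min_le_left _ _⟩⟩
    have htvB : ∀ z, t' * v n z ≤ B :=
      fun z => le_trans (by nlinarith [(hv.2 z).1, (hv.2 z).2, hvpos n z]) (le_refl B)
    have hX2I : InInterval A B (fun z => max (A / s) (t' * v n z)) :=
      ⟨ap_max _ _ (ap_mul t' ht0 _ hv.1), fun z =>
        ⟨le_trans hAs (le_max_left _ _), max_le hAsB2 (htvB z)⟩⟩
    have hY2I : InInterval A B (fun z => min (s * B) (t'⁻¹ * u n z)) :=
      ⟨ap_min _ _ (ap_mul _ (inv_pos.mpr ht0) _ hu.1), fun z =>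
        ⟨le_min hAsB (le_trans (hu.2 z).1
          (le_mul_of_one_le_left (le_trans hA.le (hu.2 z).1) h1t)),
         le_trans (min_le_left _ _) hsB⟩⟩
    have hM3 : InInterval A B (fun z => max A (t' * v n z)) :=
      ⟨ap_max A _ (ap_mul t' ht0 _ hv.1), fun z =>
        ⟨le_max_left _ _, max_le hAB.le (htvB z)⟩⟩
    have hM4 : InInterval A B (fun z => min B (t'⁻¹ * u n z)) :=
      ⟨ap_min B _ (ap_mul _ (inv_pos.mpr ht0) _ hu.1), fun z =>
        ⟨le_min hAB.le (le_trans (hu.2 z).1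
          (le_mul_of_one_le_left (le_trans hA.le (hu.2 z).1) h1t)), min_le_left _ _⟩⟩
    -- E1
    have E1 : Φ (fun z => max A (s * t' * v n z)) (fun z => min B ((s * t')⁻¹ * u n z)) x ≤
        u (n + 1) x := by
      rw [husucc]
      refine hII _ (u n) _ (v n) hM1 hu hM2 hv
        (fun z => max_le (hu.2 z).1 (hst z)) (fun z => le_min (hv.2 z).2 ?_) x
      calc v n z = (s * t')⁻¹ * (s * t' * v n z) := by field_simp
        _ ≤ (s * t')⁻¹ * u n z :=
          mul_le_mul_of_nonneg_left (hst z) (inv_nonneg.mpr hst0.le)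
    -- E2 : via hIII at s
    have E2 : φ s * Φ (fun z => max (A / s) (t' * v n z)) (fun z => min (s * B) (t'⁻¹ * u n z)) x ≤
        Φ (fun z => max A (s * t' * v n z)) (fun z => min B ((s * t')⁻¹ * u n z)) x := by
      have h3 := hIII s hs1 hs2 _ _ hX2I hY2I x
      have heq1 : (fun z => s * max (A / s) (t' * v n z)) =
          (fun z => max A (s * t' * v n z)) := by
        funext z
        rw [mul_max' s _ _ hs0.le, mul_div_cancel₀ A hs0.ne', ← mul_assoc]
      have heq2 : (fun z => s⁻¹ * min (s * B) (t'⁻¹ * u n z)) =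
          (fun z => min B ((s * t')⁻¹ * u n z)) := by
        funext z
        rw [mul_min' s⁻¹ _ _ (inv_nonneg.mpr hs0.le), inv_mul_cancel_left₀ hs0.ne',
          mul_inv, mul_assoc]
      rw [heq1, heq2] at h3
      exact h3
    -- E3 : monotonicity
    have E3 : Φ (fun z => max A (t' * v n z)) (fun z => min B (t'⁻¹ * u n z)) x ≤
        Φ (fun z => max (A / s) (t' * v n z)) (fun z => min (s * B) (t'⁻¹ * u n z)) x :=
      hII _ _ _ _ hM3 hX2I hM4 hY2I
        (fun z => max_le_max hAs (le_refl _))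
        (fun z => min_le_min hsB (le_refl _)) x
    -- E4 : core at t'
    have E4 : φ t' * Φ (v n) (u n) x ≤
        Φ (fun z => max A (t' * v n z)) (fun z => min B (t'⁻¹ * u n z)) x :=
      core t' ht1 ht2 (u n) (v n) hu hv x
    have hφs := hφpos s hs1 hs2
    rw [hvsucc]
    calc φ s * (φ t' * Φ (v n) (u n) x)
        ≤ φ s * Φ (fun z => max A (t' * v n z)) (fun z => min B (t'⁻¹ * u n z)) x :=
          mul_le_mul_of_nonneg_left E4 hφs.le
      _ ≤ φ s * Φ (fun z => max (A / s) (t' * v n z)) (fun z => min (s * B) (t'⁻¹ * u n z)) x :=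
          mul_le_mul_of_nonneg_left E3 hφs.le
      _ ≤ Φ (fun z => max A (s * t' * v n z)) (fun z => min B ((s * t')⁻¹ * u n z)) x := E2
      _ ≤ u (n + 1) x := E1
  -- T := sup τ = 1
  set T : ℝ := sSup (Set.range τ) with hT_def
  have hbddτ : BddAbove (Set.range τ) := ⟨1, by rintro y ⟨n, rfl⟩; exact hτub n⟩
  have hneτ : (Set.range τ).Nonempty := ⟨τ 0, 0, rfl⟩
  have hTub : T ≤ 1 := csSup_le hneτ (by rintro y ⟨n, rfl⟩; exact hτub n)
  have hTlb : A / B ≤ T := le_trans (hτlb 0) (le_csSup hbddτ (Set.mem_range_self 0))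
  have hT1 : T = 1 := by
    by_contra hneT
    have hT_lt : T < 1 := lt_of_le_of_ne hTub hneT
    have hTpos : 0 < T := lt_of_lt_of_le hABr hTlb
    have hφT := hφ T hTlb hT_lt
    have hφTpos := hφpos T hTlb hT_lt
    by_cases hcase : ∃ n, τ n = T
    · obtain ⟨n, hn⟩ := hcase
      have h := step1 n T hTlb hT_lt (fun x => by rw [← hn]; exact hτv n x)
      have h2 := hτge (n + 1) (φ T) h
      have h3 : τ (n + 1) ≤ T := le_csSup hbddτ (Set.mem_range_self (n + 1))
      linarith
    · push_neg at hcase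
      have key : ∀ n, τ n ≤ T * T / φ T := by
        intro n
        have hlt : τ n < T :=
          lt_of_le_of_ne (le_csSup hbddτ (Set.mem_range_self n)) (hcase n)
        have hs1 : A / B ≤ τ n / T := by
          refine le_trans (hτlb n) ?_
          rw [le_div_iff₀ hTpos]
          nlinarith [hτlb n]
        have hs2 : τ n / T < 1 := (div_lt_one hTpos).mpr hlt
        have hstτ : τ n / T * T = τ n := div_mul_cancel₀ _ hTpos.ne'
        have h := step2 n (τ n / T) T hs1 hs2 hTlb hT_lt
          (fun x => by rw [hstτ]; exact hτv n x)
        have h2 : φ (τ n / T) * φ T ≤ τ (n + 1) := by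
          refine hτge (n + 1) _ (fun x => ?_)
          rw [mul_assoc]
          exact h x
        have h3 : τ n / T * φ T ≤ φ (τ n / T) * φ T :=
          mul_le_mul_of_nonneg_right (hφ _ hs1 hs2).le hφTpos.le
        have h4 : τ (n + 1) ≤ T := le_csSup hbddτ (Set.mem_range_self _)
        have h5 : τ n / T * φ T ≤ T := by linarith
        rw [le_div_iff₀ hφTpos]
        have : τ n * φ T = τ n / T * φ T * T := by field_simp
        rw [this]
        nlinarith
      have hle : T ≤ T * T / φ T := csSup_le hneτ (by rintro y ⟨n, rfl⟩; exact key n)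
      rw [le_div_iff₀ hφTpos] at hle
      nlinarith
  -- the gap goes to zero
  have gap : ∀ ε : ℝ, 0 < ε → ∃ n, ∀ x, v n x - u n x < ε := by
    intro ε hε
    have h1 : 1 - ε / B < T := by
      rw [hT1]; have : 0 < ε / B := div_pos hε hB; linarith
    obtain ⟨y, hy_mem, hy⟩ := exists_lt_of_lt_csSup hneτ h1
    obtain ⟨n, rfl⟩ := hy_mem
    refine ⟨n, fun x => ?_⟩
    have h2 := hτv n x
    have h3 : v n x ≤ B := ((good n).2.1.2 x).2
    have h4 : 0 < v n x := hvpos n x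
    have hτn1 : τ n ≤ 1 := hτub n
    have e1 : v n x - u n x ≤ (1 - τ n) * v n x := by nlinarith
    have e2 : (1 - τ n) * v n x ≤ (1 - τ n) * B :=
      mul_le_mul_of_nonneg_left h3 (by linarith)
    have e3 : (1 - τ n) * B < ε := by
      have := (lt_div_iff₀ hB).mp (by linarith : 1 - τ n < ε / B)
      linarith
    linarith
  -- the limit function
  set xt : ℝ → ℝ := fun x => sSup (Set.range fun n => u n x) with hxt_def
  have hbddu : ∀ x, BddAbove (Set.range fun n => u n x) := fun x =>
    ⟨B, by rintro y ⟨n, rfl⟩; exact ((good n).1.2 x).2⟩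
  have hxtub : ∀ n x, u n x ≤ xt x := fun n x => le_csSup (hbddu x) (Set.mem_range_self n)
  have hxtlev : ∀ n x, xt x ≤ v n x := fun n x =>
    csSup_le ⟨u 0 x, 0, rfl⟩ (by rintro y ⟨m, rfl⟩; exact ulev m n x)
  have hxtI : InInterval A B xt := by
    constructor
    · apply ap_unif
      intro ε hε
      obtain ⟨n, hn⟩ := gap ε hε
      refine ⟨u n, (good n).1.1, fun x => ?_⟩
      rw [abs_of_nonneg (sub_nonneg.mpr (hxtub n x))]
      have := hxtlev n x
      have := hn x
      linarith
    · intro x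
      constructor
      · exact le_trans (((good 0).1.2 x).1) (hxtub 0 x)
      · exact le_trans (hxtlev 0 x) (((good 0).2.1.2 x).2)
  -- any function sandwiched between all uₙ and vₙ equals xt
  have limuniq : ∀ w : ℝ → ℝ, (∀ n x, u n x ≤ w x ∧ w x ≤ v n x) → w = xt := by
    intro w hw
    funext x
    by_contra hne'
    have habs : 0 < |w x - xt x| := abs_pos.mpr (sub_ne_zero.mpr hne')
    obtain ⟨n, hn⟩ := gap _ habs
    have h1 := (hw n x).1
    have h2 := (hw n x).2
    have h3 := hxtub n x
    have h4 := hxtlev n x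
    have h5 : |w x - xt x| ≤ v n x - u n x :=
      abs_le.mpr ⟨by linarith, by linarith⟩
    linarith [hn x]
  -- the fixed point property
  have hsand_fix : ∀ n x, u n x ≤ Φ xt xt x ∧ Φ xt xt x ≤ v n x := by
    intro n x
    cases n with
    | zero =>
      constructor
      · have h := hII (fun _ => A) xt (fun _ => B) xt cAI hxtI cBI hxtI
          (fun s => (hxtI.2 s).1) (fun s => (hxtI.2 s).2) x
        exact le_trans (hI₁ x) h
      · have h := hII xt (fun _ => B) xt (fun _ => A) hxtI cBI hxtI cAI
          (fun s => (hxtI.2 s).2) (fun s => (hxtI.2 s).1) x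
        exact le_trans h (hI₂ x)
    | succ n =>
      constructor
      · rw [husucc]
        exact hII (u n) xt (v n) xt (good n).1 hxtI (good n).2.1 hxtI
          (fun s => hxtub n s) (fun s => hxtlev n s) x
      · rw [hvsucc]
        exact hII xt (v n) xt (u n) hxtI (good n).2.1 hxtI (good n).1
          (fun s => hxtlev n s) (fun s => hxtub n s) x
  have hfix : Φ xt xt = xt := limuniq _ hsand_fix
  refine ⟨xt, ⟨hxtI, hfix⟩, ?_⟩
  intro z ⟨hzI, hz⟩
  have hsand_z : ∀ n, ∀ x, u n x ≤ z x ∧ z x ≤ v n x := by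
    intro n
    induction n with
    | zero => exact fun x => ⟨(hzI.2 x).1, (hzI.2 x).2⟩
    | succ n ih =>
      intro x
      constructor
      · rw [husucc]
        have h := hII (u n) z (v n) z (good n).1 hzI (good n).2.1 hzI
          (fun s => (ih s).1) (fun s => (ih s).2) x
        rw [hz] at h
        exact h
      · rw [hvsucc]
        have h := hII z (v n) z (u n) hzI (good n).2.1 hzI (good n).1
          (fun s => (ih s).2) (fun s => (ih s).1) x
        rw [hz] at h
        exact h
  exact limuniq z (fun n x => hsand_z n x)
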